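/- If P(a₁,...,aₙ|x₁,...,xₙ) is a quantum distribution, i.e., there exist Hilbert spaces H₁,...,Hₙ, a normalized state |φ⟩ ∈ ⊗ₖHₖ and projections E_k^{a,x} on Hₖ with Σ_a E_k^{a,x} = 1 and P(ā|x̄) = ⟨φ| ⊗ₖ E_k^{a_k,x_k} |φ⟩, then P is almost quantum: there exist a single Hilbert space H, a normalized state |φ⟩ ∈ H and projections Ẽ_k^{a,x} on H satisfying (i) Σ_a Ẽ_k^{a,x} = 1 for all x,k, (ii) Ẽ₁^{a₁,x₁}···Ẽₙ^{aₙ,xₙ}|φ⟩ is invariant under permuting the party order, and (iii) P(ā|x̄) = ⟨φ| ∏ₖ Ẽ_k^{a_k,x_k} |φ⟩. -/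

import Mathlib

/-- Ordered product of operators applied to a vector:
`seqApply T v = T 0 (T 1 (... (T (n-1) v)))`, i.e. `(∏ₖ Tₖ) v` in party order. -/
def seqApply {H : Type*} [AddCommMonoid H] [Module ℂ H] {n : ℕ}
    (T : Fin n → (H →ₗ[ℂ] H)) (v : H) : H :=
  (List.ofFn T).foldr (fun f w => f w) v

/-- An almost quantum representation of an `n`-partite distribution `P` (Definition 1 of the
paper): a Hilbert space, a normalized state `φ` and projections `E k a x` (one complete family
per party `k` and input `x`) such that ordered products applied to `φ` are invariant under
permutations of the parties and reproduce the probabilities. -/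
structure AQRep {n : ℕ} {A X : Type*} [Fintype A]
    (P : (Fin n → A) → (Fin n → X) → ℝ) where
  H : Type
  [instN : NormedAddCommGroup H]
  [instI : InnerProductSpace ℂ H]
  φ : H
  E : Fin n → A → X → (H →ₗ[ℂ] H)
  norm_φ : ‖φ‖ = 1
  idem : ∀ k a x, E k a x ∘ₗ E k a x = E k a x
  selfAdj : ∀ k a x (v w : H), (inner ℂ ((E k a x) v) w : ℂ) = inner ℂ v ((E k a x) w)
  complete : ∀ k x, ∑ a, E k a x = (LinearMap.id : H →ₗ[ℂ] H)
  perm : ∀ (a : Fin n → A) (x : Fin n → X) (π : Equiv.Perm (Fin n)),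
    seqApply (fun i => E (π i) (a (π i)) (x (π i))) φ = seqApply (fun i => E i (a i) (x i)) φ
  prob : ∀ a x, (P a x : ℂ) = inner ℂ φ (seqApply (fun i => E i (a i) (x i)) φ)

/-- `P` is almost quantum iff it admits an almost quantum representation. -/
def IsAlmostQuantum {n : ℕ} {A X : Type*} [Fintype A]
    (P : (Fin n → A) → (Fin n → X) → ℝ) : Prop :=
  Nonempty (AQRep P)

lemma seqApply_eq_prod {H : Type*} [AddCommMonoid H] [Module ℂ H] {n : ℕ}
    (T : Fin n → (H →ₗ[ℂ] H)) (v : H) : seqApply T v = (List.ofFn T).prod v := by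
  unfold seqApply
  induction List.ofFn T with
  | nil => simp
  | cons f l ih => simp [ih]

/-- every quantum distribution is almost quantum.  A quantum distribution is
given by a normalized state `φ` and, for each party, a complete family of projections, where
projections of *different* parties commute (this captures the tensor-product local structure
`Ẽₖ = 1 ⊗ ... ⊗ Eₖ ⊗ ... ⊗ 1`). -/
theorem quantum_implies_almost_quantum
    {n : ℕ} {A X : Type*} [Fintype A]
    (P : (Fin n → A) → (Fin n → X) → ℝ)
    (H : Type) [NormedAddCommGroup H] [InnerProductSpace ℂ H]
    (φ : H) (hφ : ‖φ‖ = 1)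
    (E : Fin n → A → X → (H →ₗ[ℂ] H))
    (hidem : ∀ k a x, E k a x ∘ₗ E k a x = E k a x)
    (hsa : ∀ k a x (v w : H), (inner ℂ ((E k a x) v) w : ℂ) = inner ℂ v ((E k a x) w))
    (hcomplete : ∀ k x, ∑ a, E k a x = (LinearMap.id : H →ₗ[ℂ] H))
    (hcomm : ∀ k k', k ≠ k' → ∀ a x a' x',
      E k a x ∘ₗ E k' a' x' = E k' a' x' ∘ₗ E k a x)
    (hP : ∀ a x, (P a x : ℂ) = inner ℂ φ (seqApply (fun i => E i (a i) (x i)) φ)) :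
    IsAlmostQuantum P := by
  refine ⟨⟨H, φ, E, hφ, hidem, hsa, hcomplete, ?_, hP⟩⟩
  intro a x π
  rw [seqApply_eq_prod, seqApply_eq_prod]
  congr 1
  have hperm : List.Perm (List.ofFn ((fun i => E i (a i) (x i)) ∘ π))
      (List.ofFn (fun i => E i (a i) (x i))) := Equiv.Perm.ofFn_comp_perm π _
  have hpw : (List.ofFn ((fun i => E i (a i) (x i)) ∘ π)).Pairwise Commute := by
    rw [List.pairwise_ofFn]
    intro i j hij
    have : π i ≠ π j := fun h => absurd (π.injective h) hij.ne
    show _ * _ = _ * _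
    simpa [Module.End.mul_eq_comp] using hcomm (π i) (π j) this (a (π i)) (x (π i)) (a (π j)) (x (π j))
  exact hperm.prod_eq' hpw
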